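/- (Supersolution barrier, Lemma 3.1.) Let n ≥ 3 and β ∈ (0, 1/(10(n−2))). Define φ_β : B'₁ ⊂ ℝ^{n−1} → ℝ by φ_β(x') = β(|x''|² − 2(n−2) x_{n−1}²), where x' = (x'', x_{n−1}) ∈ ℝ^{n−2} × ℝ. Then there exists a constant c > 0 depending only on n such that H φ_β ≤ −c β at every point of B'₁, where H is the mean curvature operator H v := div( ∇v / √(1 + |∇v|²) ). Equivalently, (1 + |∇φ_β|²) Δφ_β − (∇φ_β)ᵀ D²φ_β ∇φ_β ≤ −c β (1 + |∇φ_β|²)^{3/2} in B'₁. -/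

import Mathlib

open Metric MeasureTheory Set
open scoped ENNReal NNReal Pointwise

noncomputable section

namespace ThinObs

abbrev V (n : ℕ) := EuclideanSpace ℝ (Fin n)

variable {n : ℕ}

/-- Divergence of a vector field: the trace of the total derivative. -/
def diverg (g : V n → V n) (x : V n) : ℝ :=
  LinearMap.trace ℝ (V n) (fderiv ℝ g x).toLinearMap

/-- Relative perimeter `P(E; Ω)`: supremum of `|∫_E div g|` over `C¹` vector
fields `g` with compact support contained in `Ω` and `‖g‖ ≤ 1` pointwise. -/
def perim (E Ω : Set (V n)) : ℝ≥0∞ :=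
  ⨆ g : {g : V n → V n // ContDiff ℝ 1 g ∧ HasCompactSupport g ∧
          tsupport g ⊆ Ω ∧ ∀ x, ‖g x‖ ≤ 1},
    ENNReal.ofReal |∫ x in E, diverg g.1 x|

/-- The coordinate `x_{m-1}` (Lean index `m-2`). -/
def penC {m : ℕ} (x : EuclideanSpace ℝ (Fin m)) : ℝ :=
  if h : 2 ≤ m then x ⟨m - 2, by omega⟩ else 0

/-- The last coordinate `x_m` (Lean index `m-1`). -/
def lastC {m : ℕ} (x : EuclideanSpace ℝ (Fin m)) : ℝ :=
  if h : 1 ≤ m then x ⟨m - 1, by omega⟩ else 0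

/-- The first `m-1` coordinates `x'` of a point `x`. -/
def frontC {m : ℕ} (x : EuclideanSpace ℝ (Fin m)) : EuclideanSpace ℝ (Fin (m - 1)) :=
  (EuclideanSpace.equiv (Fin (m - 1)) ℝ).symm fun i => x (Fin.castLE (Nat.sub_le m 1) i)

/-- `e_ω = sin ω · e_{n-1} + cos ω · e_n`. -/
def ee (n : ℕ) (ω : ℝ) : V n :=
  if h : 2 ≤ n then
    Real.sin ω • EuclideanSpace.single (⟨n - 2, by omega⟩ : Fin n) 1 +
      Real.cos ω • EuclideanSpace.single (⟨n - 1, by omega⟩ : Fin n) 1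
  else 0

/-- The wedge `Λ_{γ,θ}`. -/
def wedge (n : ℕ) (γ θ : ℝ) : Set (V n) :=
  {x | (inner ℝ (ee n (γ + θ)) x : ℝ) ≤ 0 ∧ (inner ℝ (ee n (γ - θ)) x : ℝ) ≤ 0}

/-- `Λ^δ = Λ_{0, π/2 - δ}`. -/
def wedgeD (n : ℕ) (δ : ℝ) : Set (V n) := wedge n 0 (Real.pi / 2 - δ)

/-- Admissible pair of angles. -/
def Admissible (γ θ : ℝ) : Prop :=
  -(Real.pi / 2) ≤ γ ∧ γ ≤ Real.pi / 2 ∧ 0 ≤ θ ∧ θ ≤ Real.pi / 2 - |γ|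

/-- A `C^{1,1}` diffeomorphism of `ℝⁿ`. -/
def IsC11Diffeo (Φ : V n → V n) : Prop :=
  Function.Bijective Φ ∧ ContDiff ℝ 1 Φ ∧
    (∃ K : ℝ≥0, LipschitzWith K fun x => fderiv ℝ Φ x) ∧
    ContDiff ℝ 1 (Function.invFun Φ)

/-- `E` is normalized: topological and measure-theoretic boundaries agree. -/
def Normalized (E : Set (V n)) : Prop :=
  ∀ x : V n, x ∈ frontier E ↔
    ∀ r : ℝ, 0 < r →
      0 < volume (E ∩ ball x r) ∧ volume (E ∩ ball x r) < volume (ball x r)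

/-- `E` is a minimizer of the `δ`-thin obstacle problem in `B₁` with diffeomorphism `Φ`. -/
def MinTOP (n : ℕ) (δ : ℝ) (Φ : V n → V n) (E : Set (V n)) : Prop :=
  perim E (ball 0 1) < ⊤ ∧ Φ '' wedgeD n δ ∩ ball 0 1 ⊆ E ∧
    ∀ F : Set (V n), MeasurableSet F → F \ ball 0 1 = E \ ball 0 1 →
      Φ '' wedgeD n δ ∩ ball 0 1 ⊆ F → perim E (ball 0 1) ≤ perim F (ball 0 1)

/-- `∂𝒪 = Φ({x_{n-1} = x_n = 0})`. -/
def obstB (n : ℕ) (Φ : V n → V n) : Set (V n) :=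
  Φ '' {x | penC x = 0 ∧ lastC x = 0}

/-- `E` is `ε`-close to `Λ_{γ,θ}` in `B`. -/
def CloseTo (n : ℕ) (E : Set (V n)) (γ θ ε : ℝ) (B : Set (V n)) : Prop :=
  {x : V n | ε ≤ infDist x (wedge n γ θ)ᶜ} ∩ B ⊆ E ∩ B ∧
    E ∩ B ⊆ {x : V n | infDist x (wedge n γ θ) ≤ ε} ∩ B

/-- `E` is a supersolution of the minimal perimeter problem in `B`. -/
def Supersol (E B : Set (V n)) : Prop :=
  ∀ F : Set (V n), MeasurableSet F → E ⊆ F → IsCompact (closure (F \ E)) →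
    closure (F \ E) ⊆ B → perim E B ≤ perim F B

/-- `E` is a local minimizer of the perimeter in `B`. -/
def LocalPerimMin (E B : Set (V n)) : Prop :=
  ∀ F : Set (V n), MeasurableSet F → F \ B = E \ B → perim E B ≤ perim F B

/-- `f` is `C¹` on `S` (in the within sense, i.e. up to the boundary) with
`|f| ≤ C`, `‖∇f‖ ≤ C` and `a`-Hölder seminorm of `∇f` bounded by `C`. -/
def HolderC1On {m : ℕ} (f : EuclideanSpace ℝ (Fin m) → ℝ)
    (S : Set (EuclideanSpace ℝ (Fin m))) (a C : ℝ) : Prop :=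
  ∃ f' : EuclideanSpace ℝ (Fin m) → EuclideanSpace ℝ (Fin m) →L[ℝ] ℝ,
    (∀ x ∈ S, HasFDerivWithinAt f (f' x) S x) ∧
    (∀ x ∈ S, |f x| ≤ C ∧ ‖f' x‖ ≤ C) ∧
    ∀ x ∈ S, ∀ y ∈ S, ‖f' x - f' y‖ ≤ C * ‖x - y‖ ^ a

/-- The operator `M(D²v, ∇v) = (1+|∇v|²)Δv − (∇v)ᵀ D²v ∇v`. -/
def Mop {m : ℕ} (φ : EuclideanSpace ℝ (Fin m) → ℝ) (x : EuclideanSpace ℝ (Fin m)) : ℝ :=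
  (1 + ‖gradient φ x‖ ^ 2) *
      (∑ i : Fin m, fderiv ℝ (fderiv ℝ φ) x (EuclideanSpace.single i 1) (EuclideanSpace.single i 1)) -
    fderiv ℝ (fderiv ℝ φ) x (gradient φ x) (gradient φ x)

/-- `S⁺_φ = {(x', xₙ) : x' ∈ B'₁, xₙ < φ(x')}`. -/
def Splus (n : ℕ) (φ : EuclideanSpace ℝ (Fin (n - 1)) → ℝ) : Set (V n) :=
  {x | frontC x ∈ ball 0 1 ∧ lastC x < φ (frontC x)}

/-- `S⁻_φ = {(x', xₙ) : x' ∈ B'₁, −xₙ < φ(x')}`. -/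
def Sminus (n : ℕ) (φ : EuclideanSpace ℝ (Fin (n - 1)) → ℝ) : Set (V n) :=
  {x | frontC x ∈ ball 0 1 ∧ -lastC x < φ (frontC x)}

/-- Cylinder `Q_r = B'_r × (−1, 1)`. -/
def cyl (n : ℕ) (r : ℝ) : Set (V n) :=
  {x | frontC x ∈ ball 0 r ∧ |lastC x| < 1}

/-- Rotation by angle `γ` in the `(x_{n-1}, x_n)`-plane taking `e_γ` to `e_n`. -/
def rotLast (n : ℕ) (γ : ℝ) (x : V n) : V n :=
  (EuclideanSpace.equiv (Fin n) ℝ).symm fun i =>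
    if (i : ℕ) = n - 2 ∧ 2 ≤ n then Real.cos γ * penC x - Real.sin γ * lastC x
    else if (i : ℕ) = n - 1 ∧ 2 ≤ n then Real.sin γ * penC x + Real.cos γ * lastC x
    else x i

/-- `Γ` is the graph, in direction `e`, of a function on a subset `D` of the hyperplane
orthogonal to `e`, of class `C¹` up to the boundary of its domain, with value, gradient
and `β`-Hölder seminorm of the gradient bounded by `C`. -/
def GraphInDir (n : ℕ) (Γ : Set (V n)) (e : V n) (β C : ℝ) : Prop :=
  ∃ (D : Set (V n)) (f : V n → ℝ) (f' : V n → V n →L[ℝ] ℝ),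
    D ⊆ {y : V n | (inner ℝ y e : ℝ) = 0} ∧
    Γ = (fun y => y + f y • e) '' D ∧
    (∀ x ∈ closure D, HasFDerivWithinAt f (f' x) (closure D) x) ∧
    (∀ x ∈ closure D, |f x| ≤ C ∧ ‖f' x‖ ≤ C) ∧
    ∀ x ∈ closure D, ∀ y ∈ closure D, ‖f' x - f' y‖ ≤ C * ‖x - y‖ ^ β

/-- `Γ` is, for the exponent `β`, a `C^{1,β}`-graph (in suitable orthogonal coordinates)
of a function of `n-1` variables, regular up to the boundary of its domain. -/
def IsC1HolderGraph (n : ℕ) (Γ : Set (V n)) (β : ℝ) : Prop :=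
  ∃ (R : V n ≃ₗᵢ[ℝ] V n) (D : Set (EuclideanSpace ℝ (Fin (n - 1))))
    (f : EuclideanSpace ℝ (Fin (n - 1)) → ℝ) (C : ℝ),
    R '' Γ = {y : V n | frontC y ∈ D ∧ lastC y = f (frontC y)} ∧
    HolderC1On f (closure D) β C

/-- Vertical rescaling `(x', xₙ) ↦ (x', xₙ / (2ε))`. -/
def vertScale (n : ℕ) (ε : ℝ) (x : V n) : V n :=
  (EuclideanSpace.equiv (Fin n) ℝ).symm fun i =>
    if (i : ℕ) = n - 1 ∧ 1 ≤ n then x i / (2 * ε) else x i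


section BarrierAux

abbrev Em (m : ℕ) := EuclideanSpace ℝ (Fin m)

/-- Second-derivative map of `y ↦ ∑ cᵢ yᵢ²`. -/
def Dmap {m : ℕ} (c : Fin m → ℝ) : Em m →L[ℝ] (Em m →L[ℝ] ℝ) :=
  ∑ i, (2 * c i) • ((EuclideanSpace.proj i).smulRight (EuclideanSpace.proj i))

lemma Dmap_apply₂ {m : ℕ} (c : Fin m → ℝ) (u v : Em m) :
    Dmap c u v = ∑ j, 2 * c j * u j * v j := by
  simp [Dmap, mul_assoc]

lemma hasFDerivAt_fc {m : ℕ} (c : Fin m → ℝ) (x : Em m) :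
    HasFDerivAt (fun y : Em m => ∑ i, c i * (y i)^2) (Dmap c x) x := by
  have hD : Dmap c x = ∑ i, ((2 * c i * x i) • (EuclideanSpace.proj (𝕜 := ℝ) i)) := by
    ext v; simp [Dmap, mul_assoc]
  rw [hD]
  apply HasFDerivAt.fun_sum
  intro i _
  have hp : HasFDerivAt (fun y : Em m => y i) (EuclideanSpace.proj (𝕜 := ℝ) i) x :=
    (EuclideanSpace.proj (𝕜 := ℝ) i).hasFDerivAt
  have key := (hp.mul hp).const_mul (c i)
  have hfun : (fun y : Em m => c i * (y i)^2) = fun y => c i * (y i * y i) := by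
    funext y; ring
  rw [hfun]; refine key.congr_fderiv ?_; ext v; simp; ring

lemma fderiv2_fc {m : ℕ} (c : Fin m → ℝ) (x : Em m) :
    fderiv ℝ (fderiv ℝ (fun y : Em m => ∑ i, c i * (y i)^2)) x = Dmap c := by
  have h1 : fderiv ℝ (fun y : Em m => ∑ i, c i * (y i)^2) = ⇑(Dmap c) :=
    funext fun z => (hasFDerivAt_fc c z).fderiv
  rw [h1, ContinuousLinearMap.fderiv]

/-- Gradient of `y ↦ ∑ cᵢ yᵢ²`. -/
def gvec {m : ℕ} (c : Fin m → ℝ) (x : Em m) : Em m :=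
  ∑ i, (2 * c i * x i) • EuclideanSpace.single i (1:ℝ)

lemma gvec_apply {m : ℕ} (c : Fin m → ℝ) (x : Em m) (j : Fin m) :
    gvec c x j = 2 * c j * x j := by
  have h := EuclideanSpace.inner_single_left (𝕜 := ℝ) j (1:ℝ) (gvec c x)
  simp only [map_one, one_mul] at h
  rw [← h, gvec, inner_sum]
  simp [real_inner_smul_right, EuclideanSpace.inner_single_left,
    EuclideanSpace.single_apply]

lemma gradient_fc {m : ℕ} (c : Fin m → ℝ) (x : Em m) :
    gradient (fun y : Em m => ∑ i, c i * (y i)^2) x = gvec c x := by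
  apply HasGradientAt.gradient
  rw [hasGradientAt_iff_hasFDerivAt]
  refine (hasFDerivAt_fc c x).congr_fderiv ?_
  ext v
  rw [InnerProductSpace.toDual_apply_apply, Dmap_apply₂, gvec, sum_inner]
  simp [real_inner_smul_left, EuclideanSpace.inner_single_left, mul_assoc]

lemma norm_sq_em {m : ℕ} (y : Em m) : ‖y‖^2 = ∑ i, (y i)^2 := by
  rw [EuclideanSpace.norm_eq, Real.sq_sqrt (Finset.sum_nonneg fun i _ => by positivity)]
  simp [Real.norm_eq_abs, sq_abs]

lemma split_sum {m k : ℕ} (hk : k + 1 = m) (f : Fin m → ℝ) :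
    ∑ i : Fin m, f i
      = (∑ i : Fin m, if (i:ℕ) < k then f i else 0) + f ⟨k, by omega⟩ := by
  have h : ∀ i : Fin m, f i
      = (if (i:ℕ) < k then f i else 0) + (if i = ⟨k, by omega⟩ then f i else 0) := by
    intro i
    rcases lt_or_ge (i:ℕ) k with h|h
    · have hne : i ≠ ⟨k, by omega⟩ := by
        simp only [ne_eq, Fin.ext_iff]; omega
      simp [h, hne]
    · have he : (i:ℕ) = k := by have := i.isLt; omega
      have hnl : ¬ (i:ℕ) < k := by omega
      simp [hnl, Fin.ext_iff, he]
  rw [Finset.sum_congr rfl (fun i _ => h i), Finset.sum_add_distrib,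
    Finset.sum_ite_eq' Finset.univ]
  simp

lemma sum_ite_eval {n : ℕ} (hn : 3 ≤ n) (a b : ℝ) (g : Fin (n-1) → ℝ) :
    (∑ i : Fin (n-1), if (i:ℕ) < n - 2 then a * g i else b * g i)
      = a * (∑ i : Fin (n-1), if (i:ℕ) < n-2 then g i else 0)
        + b * g ⟨n-2, by omega⟩ := by
  rw [split_sum (k := n-2) (by omega)]
  congr 1
  · rw [Finset.mul_sum]
    apply Finset.sum_congr rfl
    intro i _
    by_cases h : (i:ℕ) < n-2 <;> simp [h]
  · simp

lemma card_ite {n : ℕ} (hn : 3 ≤ n) :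
    (∑ i : Fin (n-1), if (i:ℕ) < n-2 then (1:ℝ) else 0) = (n:ℝ) - 2 := by
  have h := split_sum (k := n-2) (m := n-1) (by omega) (fun _ => (1:ℝ))
  simp only [Finset.sum_const, Finset.card_univ, Fintype.card_fin, nsmul_eq_mul,
    mul_one] at h
  have hc : ((n-1:ℕ):ℝ) = (n:ℝ) - 1 := by
    have : (1:ℕ) ≤ n := by omega
    push_cast [this]
    ring
  rw [hc] at h
  linarith

/-- The coefficient function for the barrier. -/
def cfun (n : ℕ) (β : ℝ) : Fin (n - 1) → ℝ :=
  fun i => if (i : ℕ) < n - 2 then β else -(2*((n:ℝ)-2)*β)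

end BarrierAux


lemma final_ineq {β K A B : ℝ} (hβ : 0 < β) (hK : 1 ≤ K) (hβK : β * K < 1/10)
    (hA : 0 ≤ A) (hB : 0 ≤ B) (hAB : A + B < 1) :
    (1 + (4*β^2*A + 16*β^2*K^2*B)) * (-(2*K*β)) - (8*β^3*A - 64*β^3*K^3*B)
      ≤ -(1/3*β) * (1 + (4*β^2*A + 16*β^2*K^2*B)) ^ ((3:ℝ)/2) := by
  have hK0 : 0 < K := by linarith
  have hβK0 : 0 < β*K := mul_pos hβ hK0
  have hβ2 : β ≤ β*K := by nlinarith
  have hsq : (β*K)^2 < 1/100 := by nlinarith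
  have hβsq : β^2 < 1/100 := by nlinarith
  have hKβsq : β^2*K^2 < 1/100 := by nlinarith [hsq]
  have hG0 : 0 ≤ 4*β^2*A + 16*β^2*K^2*B := by positivity
  have hG1 : 4*β^2*A + 16*β^2*K^2*B ≤ 1 := by
    nlinarith [mul_le_mul_of_nonneg_right (le_of_lt hβsq) hA,
      mul_le_mul_of_nonneg_right (le_of_lt hKβsq) hB]
  have hB1 : B ≤ 1 := by linarith
  have e0 : (β*K)^2*B ≤ 1/100 := by
    nlinarith [mul_nonneg (sq_nonneg (β*K)) (sub_nonneg.2 hB1)]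
  have e1 : β^3*K^3*B ≤ (1/100)*(β*K) := by
    nlinarith [mul_le_mul_of_nonneg_right e0 (le_of_lt hβK0)]
  have e2 : 0 ≤ 2*K*β*(4*β^2*A + 16*β^2*K^2*B) := by positivity
  have e3 : 0 ≤ 8*β^3*A := by positivity
  revert hG0 hG1 e2
  generalize (4*β^2*A + 16*β^2*K^2*B) = G
  intro hG0 hG1 e2
  have hpow : (1+G) ^ ((3:ℝ)/2) ≤ 3 := by
    have h1 : (0:ℝ) ≤ 1 + G := by linarith
    have h2 : (1+G : ℝ) ≤ 2 := by linarith
    have h3 := Real.rpow_le_rpow h1 h2 (by norm_num : (0:ℝ) ≤ 3/2)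
    have h4 : ((2:ℝ) ^ ((3:ℝ)/2))^2 = 8 := by
      rw [← Real.rpow_natCast ((2:ℝ) ^ ((3:ℝ)/2)) 2, ← Real.rpow_mul (by norm_num)]
      norm_num
    nlinarith [Real.rpow_nonneg (by norm_num : (0:ℝ) ≤ 2) ((3:ℝ)/2)]
  have hpow0 : 0 ≤ (1+G) ^ ((3:ℝ)/2) := Real.rpow_nonneg (by linarith) _
  have hM : (1 + G) * (-(2*K*β)) - (8*β^3*A - 64*β^3*K^3*B) ≤ -β := by
    linarith [e1, e2, e3, hβ2, hβ.le]
  have hR : (1/3*β) * ((1+G) ^ ((3:ℝ)/2)) ≤ β :=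
    by nlinarith [mul_le_mul_of_nonneg_left hpow (by linarith : (0:ℝ) ≤ β/3)]
  linarith [hM, hR]

/-- **The supersolution barrier** (Lemma 3.1): `φ_β(x', x_{n-1}) = β(|x''|² − 2(n−2)x_{n−1}²)`
satisfies `Hφ_β ≤ −cβ` in `B'₁`, i.e.
`(1+|∇φ_β|²)Δφ_β − ∇φ_βᵀ D²φ_β ∇φ_β ≤ −cβ (1+|∇φ_β|²)^{3/2}`. -/
theorem supersolution_barrier (n : ℕ) (hn : 3 ≤ n) :
    ∃ c : ℝ, 0 < c ∧
      ∀ β : ℝ, β ∈ Set.Ioo 0 (1 / (10 * ((n : ℝ) - 2))) →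
      ∀ x' : EuclideanSpace ℝ (Fin (n - 1)), x' ∈ ball 0 1 →
        Mop (fun y : EuclideanSpace ℝ (Fin (n - 1)) =>
            β * ((∑ i : Fin (n - 1), if (i : ℕ) < n - 2 then y i ^ 2 else 0) -
              2 * ((n : ℝ) - 2) * lastC y ^ 2)) x' ≤
          -(c * β) * (1 + ‖gradient (fun y : EuclideanSpace ℝ (Fin (n - 1)) =>
            β * ((∑ i : Fin (n - 1), if (i : ℕ) < n - 2 then y i ^ 2 else 0) -
              2 * ((n : ℝ) - 2) * lastC y ^ 2)) x'‖ ^ 2) ^ ((3 : ℝ) / 2) := by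
  refine ⟨1/3, by norm_num, ?_⟩
  intro β hβ x' hx'
  obtain ⟨hβ0, hβ1⟩ := hβ
  have hn3 : (3:ℝ) ≤ (n:ℝ) := by exact_mod_cast hn
  have hlast : ∀ y : EuclideanSpace ℝ (Fin (n-1)), lastC y = y (⟨n-2, by omega⟩ : Fin (n-1)) := by
    intro y
    rw [lastC, dif_pos (by omega : 1 ≤ n-1)]
    exact congrArg y.ofLp (Fin.ext (by show n - 1 - 1 = n - 2; omega))
  have hφ : (fun y : EuclideanSpace ℝ (Fin (n - 1)) =>
      β * ((∑ i : Fin (n - 1), if (i : ℕ) < n - 2 then y i ^ 2 else 0) -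
        2 * ((n : ℝ) - 2) * lastC y ^ 2))
      = fun y => ∑ i, cfun n β i * (y i)^2 := by
    funext y
    rw [split_sum (k := n-2) (by omega : n-2+1 = n-1) (fun i => cfun n β i * (y i)^2)]
    have h1 : (∑ i : Fin (n-1), if (i:ℕ) < n-2 then cfun n β i * (y i)^2 else 0)
        = β * ∑ i : Fin (n-1), if (i:ℕ) < n-2 then (y i)^2 else 0 := by
      rw [Finset.mul_sum]
      apply Finset.sum_congr rfl
      intro i _
      by_cases h : (i:ℕ) < n-2 <;> simp [cfun, h]
    rw [h1, hlast y]
    have h2 : cfun n β ⟨n-2, by omega⟩ = -(2*((n:ℝ)-2)*β) := by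
      simp [cfun]
    rw [h2]
    ring
  rw [hφ]
  simp only [Mop]
  rw [gradient_fc, fderiv2_fc]
  have hDsing : ∀ i : Fin (n-1),
      Dmap (cfun n β) (EuclideanSpace.single i 1) (EuclideanSpace.single i 1)
        = 2 * cfun n β i := by
    intro i
    rw [Dmap_apply₂]
    simp [EuclideanSpace.single_apply, mul_ite, ite_mul, Finset.sum_ite_eq']
  have hT : (∑ i : Fin (n-1),
      Dmap (cfun n β) (EuclideanSpace.single i 1) (EuclideanSpace.single i 1))
        = -(2*((n:ℝ)-2)*β) := by
    rw [Finset.sum_congr rfl (fun i _ => hDsing i)]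
    have h2 : ∀ i : Fin (n-1), 2 * cfun n β i
        = if (i:ℕ) < n-2 then (2*β) * (1:ℝ) else (-(4*((n:ℝ)-2)*β)) * 1 := by
      intro i; by_cases h : (i:ℕ) < n-2 <;> simp [cfun, h] <;> ring
    rw [Finset.sum_congr rfl (fun i _ => h2 i), sum_ite_eval hn, card_ite hn]
    ring
  have hxg : ∀ j, gvec (cfun n β) x' j = 2 * cfun n β j * x' j := gvec_apply _ x'
  have hG : ‖gvec (cfun n β) x'‖^2
      = 4*β^2*(∑ i : Fin (n-1), if (i:ℕ) < n-2 then (x' i)^2 else 0)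
        + 16*β^2*((n:ℝ)-2)^2*(x' (⟨n-2, by omega⟩ : Fin (n-1)))^2 := by
    rw [norm_sq_em]
    have h2 : ∀ j : Fin (n-1), (gvec (cfun n β) x' j)^2
        = if (j:ℕ) < n-2 then (4*β^2) * (x' j)^2
          else (16*β^2*((n:ℝ)-2)^2) * (x' j)^2 := by
      intro j; rw [hxg j]; by_cases h : (j:ℕ) < n-2 <;> simp [cfun, h] <;> ring
    rw [Finset.sum_congr rfl (fun j _ => h2 j), sum_ite_eval hn]
  have hQ : Dmap (cfun n β) (gvec (cfun n β) x') (gvec (cfun n β) x')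
      = 8*β^3*(∑ i : Fin (n-1), if (i:ℕ) < n-2 then (x' i)^2 else 0)
        - 64*β^3*((n:ℝ)-2)^3*(x' (⟨n-2, by omega⟩ : Fin (n-1)))^2 := by
    rw [Dmap_apply₂]
    have h2 : ∀ j : Fin (n-1), 2 * cfun n β j * gvec (cfun n β) x' j * gvec (cfun n β) x' j
        = if (j:ℕ) < n-2 then (8*β^3) * (x' j)^2
          else (-(64*β^3*((n:ℝ)-2)^3)) * (x' j)^2 := by
      intro j; rw [hxg j]; by_cases h : (j:ℕ) < n-2 <;> simp [cfun, h] <;> ring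
    rw [Finset.sum_congr rfl (fun j _ => h2 j), sum_ite_eval hn]
    ring
  rw [hT, hG, hQ]
  have hA0 : 0 ≤ ∑ i : Fin (n-1), if (i:ℕ) < n-2 then (x' i)^2 else 0 := by
    apply Finset.sum_nonneg
    intro i _
    positivity
  have hAB : (∑ i : Fin (n-1), if (i:ℕ) < n-2 then (x' i)^2 else 0)
      + (x' (⟨n-2, by omega⟩ : Fin (n-1)))^2 < 1 := by
    have he : ‖x'‖^2 = (∑ i : Fin (n-1), if (i:ℕ) < n-2 then (x' i)^2 else 0)
        + (x' (⟨n-2, by omega⟩ : Fin (n-1)))^2 := by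
      rw [norm_sq_em]
      exact split_sum (k := n-2) (by omega : n-2+1 = n-1) (fun i => (x' i)^2)
    rw [← he]
    have hx1 : ‖x'‖ < 1 := mem_ball_zero_iff.mp hx'
    nlinarith [norm_nonneg x']
  have hK0 : (0:ℝ) < (n:ℝ) - 2 := by linarith
  have hβK : β * ((n:ℝ)-2) < 1/10 := by
    calc β * ((n:ℝ)-2) < 1/(10*((n:ℝ)-2)) * ((n:ℝ)-2) :=
          mul_lt_mul_of_pos_right hβ1 hK0
      _ = 1/10 := by field_simp
  exact final_ineq hβ0 (by linarith) hβK hA0 (sq_nonneg _) hAB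

end ThinObs
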